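/- arXiv:0811.0427 — 9 statements merged into one kernel-verified Lean document; each statement's English description precedes it below -/
import Mathlib

section
/- For every integer l ≥ 1, the 2-SAT formula F over the variables y_1, ..., y_{2l} whose clauses are {y_i ∨ y_{i+1}, ¬y_i ∨ ¬y_{i+1} : 1 ≤ i ≤ 2l-1} together with the two clauses y_1 ∨ ¬y_{2l} and ¬y_1 ∨ y_{2l} is minimal unsatisfiable: F is unsatisfiable, and for every clause c of F the formula obtained from F by removing c is satisfiable. -/
/-- An assignment `a` satisfies a clause if the clause contains a literal `(v, b)` with `a v = b`. -/
def ClauseSat {V : Type} (a : V → Bool) (c : Finset (V × Bool)) : Prop :=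
  ∃ p ∈ c, a p.1 = p.2

/-- An assignment satisfies a CNF formula if it satisfies every clause. -/
def FormulaSat {V : Type} (a : V → Bool) (F : Finset (Finset (V × Bool))) : Prop :=
  ∀ c ∈ F, ClauseSat a c

/-- A CNF formula is satisfiable if some assignment satisfies it. -/
def Satisfiable {V : Type} (F : Finset (Finset (V × Bool))) : Prop :=
  ∃ a : V → Bool, FormulaSat a F

/-- A CNF formula is minimal unsatisfiable if it is unsatisfiable but removing
any single clause yields a satisfiable formula. -/
def MinimalUnsat {V : Type} [DecidableEq V] (F : Finset (Finset (V × Bool))) : Prop :=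
  ¬ Satisfiable F ∧ ∀ c ∈ F, Satisfiable (F.erase c)

/-- A `k`-SAT formula: every clause has exactly `k` literals whose underlying
variables are pairwise distinct. -/
def IsKSat {V : Type} [DecidableEq V] (k : ℕ) (F : Finset (Finset (V × Bool))) : Prop :=
  ∀ c ∈ F, c.card = k ∧ (c.image Prod.fst).card = k

/-- The 2-SAT formula over variables `y_0, …, y_{2l-1}` with clauses
`y_i ∨ y_{i+1}` and `¬y_i ∨ ¬y_{i+1}` for `0 ≤ i ≤ 2l-2`, together with
`y_0 ∨ ¬y_{2l-1}` and `¬y_0 ∨ y_{2l-1}`. -/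
def cycleFormula (l : ℕ) : Finset (Finset (ℕ × Bool)) :=
  ((Finset.range (2 * l - 1)).image fun i =>
      ({(i, true), (i + 1, true)} : Finset (ℕ × Bool))) ∪
  ((Finset.range (2 * l - 1)).image fun i =>
      ({(i, false), (i + 1, false)} : Finset (ℕ × Bool))) ∪
  ({{(0, true), (2 * l - 1, false)}, {(0, false), (2 * l - 1, true)}} :
      Finset (Finset (ℕ × Bool)))

lemma mem_cycleFormula {l : ℕ} {c : Finset (ℕ × Bool)} :
    c ∈ cycleFormula l ↔
      (∃ i, i < 2*l-1 ∧ ({(i,true),(i+1,true)} : Finset (ℕ × Bool)) = c) ∨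
      (∃ i, i < 2*l-1 ∧ ({(i,false),(i+1,false)} : Finset (ℕ × Bool)) = c) ∨
      c = {(0,true),(2*l-1,false)} ∨ c = {(0,false),(2*l-1,true)} := by
  constructor
  · intro h
    simp only [cycleFormula, Finset.mem_union, Finset.mem_image, Finset.mem_range,
      Finset.mem_insert, Finset.mem_singleton] at h
    rcases h with (⟨i,hi,h⟩|⟨i,hi,h⟩)|(h|h)
    exacts [Or.inl ⟨i,hi,h⟩, Or.inr (Or.inl ⟨i,hi,h⟩), Or.inr (Or.inr (Or.inl h)),
      Or.inr (Or.inr (Or.inr h))]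
  · intro h
    simp only [cycleFormula, Finset.mem_union, Finset.mem_image, Finset.mem_range,
      Finset.mem_insert, Finset.mem_singleton]
    rcases h with ⟨i,hi,h⟩|⟨i,hi,h⟩|h|h
    exacts [Or.inl (Or.inl ⟨i,hi,h⟩), Or.inl (Or.inr ⟨i,hi,h⟩), Or.inr (Or.inl h),
      Or.inr (Or.inr h)]

lemma sat_pair {a : ℕ → Bool} {u v : ℕ} {b₁ b₂ : Bool} :
    ClauseSat a {(u,b₁),(v,b₂)} ↔ a u = b₁ ∨ a v = b₂ := by
  simp [ClauseSat]

lemma pos_eq_iff {i j : ℕ} (b : Bool) :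
    ({(i,b),(i+1,b)} : Finset (ℕ × Bool)) = {(j,b),(j+1,b)} ↔ i = j := by
  constructor
  · intro h
    have hi : (i, b) ∈ ({(j,b),(j+1,b)} : Finset (ℕ × Bool)) := by
      rw [← h]; simp
    have hj : (j, b) ∈ ({(i,b),(i+1,b)} : Finset (ℕ × Bool)) := by
      rw [h]; simp
    simp only [Finset.mem_insert, Finset.mem_singleton, Prod.mk.injEq] at hi hj
    omega
  · rintro rfl; rfl

theorem cycleFormula_minimalUnsat (l : ℕ) (hl : 1 ≤ l) :
    MinimalUnsat (cycleFormula l) := by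
  constructor
  · rintro ⟨a, ha⟩
    have hne : ∀ i, i < 2*l-1 → a i ≠ a (i+1) := by
      intro i hi
      have h1 := ha _ (mem_cycleFormula.2 (Or.inl ⟨i, hi, rfl⟩))
      have h2 := ha _ (mem_cycleFormula.2 (Or.inr (Or.inl ⟨i, hi, rfl⟩)))
      rw [sat_pair] at h1 h2
      rcases h1 with h1 | h1 <;> rcases h2 with h2 | h2 <;> simp_all
    have key : ∀ i, i ≤ 2*l-1 → a i = (decide (i % 2 = 1)).xor (a 0) := by
      intro i
      induction i with
      | zero => simp
      | succ n ih =>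
        intro hn
        have h1 : a (n+1) = ! a n := by
          have := hne n (by omega)
          rcases Bool.eq_false_or_eq_true (a n) with h | h <;>
            rcases Bool.eq_false_or_eq_true (a (n+1)) with h' | h' <;> simp_all
        rw [h1, ih (by omega)]
        rcases Nat.mod_two_eq_zero_or_one n with h | h
        · have h' : (n+1) % 2 = 1 := by omega
          simp [h, h']
        · have h' : (n+1) % 2 = 0 := by omega
          simp [h, h']
    have hlast : a (2*l-1) = ! a 0 := by
      have := key (2*l-1) le_rfl
      have h : (2*l-1) % 2 = 1 := by omega
      simp [h] at this
      simp [this]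
    have h1 := ha _ (mem_cycleFormula.2 (Or.inr (Or.inr (Or.inl rfl))))
    have h2 := ha _ (mem_cycleFormula.2 (Or.inr (Or.inr (Or.inr rfl))))
    rw [sat_pair] at h1 h2
    rcases Bool.eq_false_or_eq_true (a 0) with h | h <;> simp [h, hlast] at h1 h2
  · intro c hc
    rcases mem_cycleFormula.1 hc with ⟨j, hj, hcj⟩ | ⟨j, hj, hcj⟩ | hcj | hcj
    · -- remove positive clause j
      refine ⟨fun i => if i ≤ j then decide (i % 2 ≠ j % 2) else decide (i % 2 = j % 2), ?_⟩
      intro c' hc'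
      have hc'F := Finset.mem_of_mem_erase hc'
      have hne := Finset.ne_of_mem_erase hc'
      rcases mem_cycleFormula.1 hc'F with ⟨i, hi, hci⟩ | ⟨i, hi, hci⟩ | hci | hci
      · subst hci
        have hij : i ≠ j := by
          intro h; exact hne (by rw [← hcj, (pos_eq_iff true).2 h])
        rw [sat_pair]
        by_cases h1 : i ≤ j <;> by_cases h2 : i + 1 ≤ j <;> simp [h1, h2] <;> omega
      · subst hci
        rw [sat_pair]
        by_cases h1 : i ≤ j <;> by_cases h2 : i + 1 ≤ j <;> simp [h1, h2] <;> omega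
      · subst hci
        rw [sat_pair]
        have h0 : (0:ℕ) ≤ j := Nat.zero_le j
        have h2 : ¬ (2*l-1 ≤ j) := by omega
        simp only [if_pos h0, if_neg h2, decide_eq_true_eq, decide_eq_false_iff_not]
        omega
      · subst hci
        rw [sat_pair]
        have h0 : (0:ℕ) ≤ j := Nat.zero_le j
        have h2 : ¬ (2*l-1 ≤ j) := by omega
        simp only [if_pos h0, if_neg h2, decide_eq_true_eq, decide_eq_false_iff_not]
        omega
    · -- remove negative clause j
      refine ⟨fun i => if i ≤ j then decide (i % 2 = j % 2) else decide (i % 2 ≠ j % 2), ?_⟩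
      intro c' hc'
      have hc'F := Finset.mem_of_mem_erase hc'
      have hne := Finset.ne_of_mem_erase hc'
      rcases mem_cycleFormula.1 hc'F with ⟨i, hi, hci⟩ | ⟨i, hi, hci⟩ | hci | hci
      · subst hci
        rw [sat_pair]
        by_cases h1 : i ≤ j <;> by_cases h2 : i + 1 ≤ j <;> simp [h1, h2] <;> omega
      · subst hci
        have hij : i ≠ j := by
          intro h; exact hne (by rw [← hcj, (pos_eq_iff false).2 h])
        rw [sat_pair]
        by_cases h1 : i ≤ j <;> by_cases h2 : i + 1 ≤ j <;> simp [h1, h2] <;> omega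
      · subst hci
        rw [sat_pair]
        have h0 : (0:ℕ) ≤ j := Nat.zero_le j
        have h2 : ¬ (2*l-1 ≤ j) := by omega
        simp only [if_pos h0, if_neg h2, decide_eq_true_eq, decide_eq_false_iff_not]
        omega
      · subst hci
        rw [sat_pair]
        have h0 : (0:ℕ) ≤ j := Nat.zero_le j
        have h2 : ¬ (2*l-1 ≤ j) := by omega
        simp only [if_pos h0, if_neg h2, decide_eq_true_eq, decide_eq_false_iff_not]
        omega
    · -- remove {(0,true),(2l-1,false)}
      refine ⟨fun i => decide (i % 2 = 1), ?_⟩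
      intro c' hc'
      have hc'F := Finset.mem_of_mem_erase hc'
      have hne := Finset.ne_of_mem_erase hc'
      rcases mem_cycleFormula.1 hc'F with ⟨i, hi, hci⟩ | ⟨i, hi, hci⟩ | hci | hci
      · subst hci; rw [sat_pair]; simp only [decide_eq_true_eq]; omega
      · subst hci; rw [sat_pair]; simp only [decide_eq_false_iff_not]; omega
      · exact absurd (hci.trans hcj.symm) hne
      · subst hci; rw [sat_pair]
        left; simp
    · -- remove {(0,false),(2l-1,true)}
      refine ⟨fun i => decide (i % 2 = 0), ?_⟩
      intro c' hc'
      have hc'F := Finset.mem_of_mem_erase hc'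
      have hne := Finset.ne_of_mem_erase hc'
      rcases mem_cycleFormula.1 hc'F with ⟨i, hi, hci⟩ | ⟨i, hi, hci⟩ | hci | hci
      · subst hci; rw [sat_pair]; simp only [decide_eq_true_eq]; omega
      · subst hci; rw [sat_pair]; simp only [decide_eq_false_iff_not]; omega
      · subst hci; rw [sat_pair]
        left; simp
      · exact absurd (hci.trans hcj.symm) hne
end

section
/- Every minimal unsatisfiable 2-SAT formula over n Boolean variables has at most 4n clauses. -/
set_option linter.unusedSectionVars false

namespace TwoSatAux

variable {V : Type} [DecidableEq V]

def neg (p : V × Bool) : V × Bool := (p.1, !p.2)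

@[simp] lemma neg_neg (p : V × Bool) : neg (neg p) = p := by simp [neg]

def Step (F : Finset (Finset (V × Bool))) (x y : V × Bool) : Prop :=
  ∃ c ∈ F, neg x ∈ c ∧ y ∈ c ∧ neg x ≠ y

def Reach (F : Finset (Finset (V × Bool))) : V × Bool → V × Bool → Prop :=
  Relation.ReflTransGen (Step F)

lemma step_mono {S F : Finset (Finset (V × Bool))} (h : S ⊆ F) {x y} :
    Step S x y → Step F x y := by
  rintro ⟨c, hc, h1, h2, h3⟩; exact ⟨c, h hc, h1, h2, h3⟩

lemma reach_mono {S F : Finset (Finset (V × Bool))} (h : S ⊆ F) {x y} :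
    Reach S x y → Reach F x y :=
  fun hr => Relation.ReflTransGen.mono (r := Step S) (p := Step F) (fun _ _ => step_mono h) _ _ hr

lemma step_flip {F : Finset (Finset (V × Bool))} {x y} (h : Step F x y) :
    Step F (neg y) (neg x) := by
  obtain ⟨c, hc, h1, h2, h3⟩ := h
  exact ⟨c, hc, by simpa using h2, h1, by simpa using h3.symm⟩

lemma reach_flip {F : Finset (Finset (V × Bool))} {x y} (h : Reach F x y) :
    Reach F (neg y) (neg x) := by
  induction h with
  | refl => exact Relation.ReflTransGen.refl
  | tail _ hs ih => exact Relation.ReflTransGen.head (step_flip hs) ih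

def Lit (a : V → Bool) (p : V × Bool) : Prop := a p.1 = p.2

lemma lit_neg {a : V → Bool} {p : V × Bool} : Lit a (neg p) ↔ ¬ Lit a p := by
  simp only [Lit, neg]
  cases p.2 <;> simp

lemma step_prop {F : Finset (Finset (V × Bool))} {a : V → Bool}
    (hcard : ∀ c ∈ F, c.card = 2) (hsat : FormulaSat a F) {x y}
    (h : Step F x y) (hx : Lit a x) : Lit a y := by
  obtain ⟨c, hc, h1, h2, h3⟩ := h
  have hsub : ({neg x, y} : Finset (V × Bool)) ⊆ c := by
    intro w hw
    simp only [Finset.mem_insert, Finset.mem_singleton] at hw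
    rcases hw with rfl | rfl
    · exact h1
    · exact h2
  have hce : c = {neg x, y} := by
    refine (Finset.eq_of_subset_of_card_le hsub ?_).symm
    rw [hcard c hc, Finset.card_insert_of_notMem (by simp [h3]), Finset.card_singleton]
  obtain ⟨p, hp, hap⟩ := hsat c hc
  rw [hce] at hp
  simp only [Finset.mem_insert, Finset.mem_singleton] at hp
  rcases hp with rfl | rfl
  · exact absurd (lit_neg.mp hap) (not_not_intro hx)
  · exact hap

lemma reach_prop {F : Finset (Finset (V × Bool))} {a : V → Bool}
    (hcard : ∀ c ∈ F, c.card = 2) (hsat : FormulaSat a F) {x y}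
    (h : Reach F x y) (hx : Lit a x) : Lit a y := by
  induction h with
  | refl => exact hx
  | tail _ hs ih => exact step_prop hcard hsat hs ih

lemma getLast_eq_of_eq {α : Type*} {l m : List α} (h : l = m) (hl : l ≠ []) :
    l.getLast hl = m.getLast (h ▸ hl) := by subst h; rfl

lemma exists_nodup_chain_aux {α : Type*} (r : α → α → Prop) :
    ∀ (n : ℕ) (l : List α), l.length ≤ n → ∀ a, List.Chain r a l →
      ∃ l', List.Chain r a l' ∧
        (a :: l').getLast (List.cons_ne_nil _ _) = (a :: l).getLast (List.cons_ne_nil _ _) ∧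
        (a :: l').Nodup ∧ l'.length ≤ l.length ∧ ∀ x ∈ l', x ∈ l := by
  intro n
  induction n with
  | zero =>
    intro l hl a _
    have : l = [] := List.length_eq_zero_iff.mp (Nat.le_zero.mp hl)
    subst this
    exact ⟨[], List.Chain.nil, rfl, List.nodup_singleton a, le_rfl, by simp⟩
  | succ n ih =>
    intro l hl a hc
    by_cases ha : a ∈ l
    · obtain ⟨l₁, l₂, rfl⟩ := List.append_of_mem ha
      have hc2 : List.Chain r a l₂ := (List.isChain_cons_split.mp hc).2
      have hlen : l₂.length ≤ n := by
        simp only [List.length_append, List.length_cons] at hl ⊢; omega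
      obtain ⟨l', h1, h2, h3, h4, h5⟩ := ih l₂ hlen a hc2
      refine ⟨l', h1, ?_, h3, ?_, ?_⟩
      · rw [h2, getLast_eq_of_eq (show a :: (l₁ ++ a :: l₂) = (a :: l₁) ++ (a :: l₂) by simp)
          (List.cons_ne_nil _ _), List.getLast_append_of_ne_nil _ (List.cons_ne_nil _ _)]
      · simp only [List.length_append, List.length_cons]; omega
      · intro x hx
        have := h5 x hx
        simp only [List.mem_append, List.mem_cons]
        exact Or.inr (Or.inr this)
    · cases l with
      | nil => exact ⟨[], List.Chain.nil, rfl, List.nodup_singleton a, le_rfl, by simp⟩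
      | cons c t =>
        obtain ⟨hac, hct⟩ := List.chain_cons.mp hc
        have hlen : t.length ≤ n := by simp at hl; omega
        obtain ⟨t', h1, h2, h3, h4, h5⟩ := ih t hlen c hct
        refine ⟨c :: t', List.chain_cons.mpr ⟨hac, h1⟩, ?_, ?_, by simp; omega, ?_⟩
        · rw [List.getLast_cons_cons, h2, List.getLast_cons_cons]
        · refine List.nodup_cons.mpr ⟨?_, h3⟩
          intro hmem
          apply ha
          rcases List.mem_cons.mp hmem with rfl | hx
          · exact List.mem_cons_self
          · exact List.mem_cons.mpr (Or.inr (h5 a hx))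
        · intro x hx
          rcases List.mem_cons.mp hx with rfl | hx
          · exact List.mem_cons_self
          · exact List.mem_cons.mpr (Or.inr (h5 x hx))

lemma exists_nodup_chain {α : Type*} (r : α → α → Prop) {a b : α}
    (h : Relation.ReflTransGen r a b) :
    ∃ l, List.Chain r a l ∧ (a :: l).getLast (List.cons_ne_nil _ _) = b ∧ (a :: l).Nodup := by
  obtain ⟨l, hl1, hl2⟩ := List.exists_isChain_cons_of_relationReflTransGen h
  obtain ⟨l', h1, h2, h3, -, -⟩ := exists_nodup_chain_aux r l.length l le_rfl a hl1
  exact ⟨l', h1, h2.trans hl2, h3⟩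

lemma chain_clauses {F : Finset (Finset (V × Bool))} :
    ∀ (l : List (V × Bool)) (x : V × Bool), List.Chain (Step F) x l →
      ∃ S : Finset (Finset (V × Bool)), S ⊆ F ∧ S.card ≤ l.length ∧
        Reach S x ((x :: l).getLast (List.cons_ne_nil _ _)) := by
  intro l
  induction l with
  | nil =>
    intro x _
    exact ⟨∅, by simp, by simp, Relation.ReflTransGen.refl⟩
  | cons y t ih =>
    intro x hc
    obtain ⟨hxy, hyt⟩ := List.chain_cons.mp hc
    obtain ⟨c, hcF, h1, h2, h3⟩ := hxy
    obtain ⟨S, hS, hcard, hreach⟩ := ih y hyt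
    refine ⟨insert c S, Finset.insert_subset hcF hS, ?_, ?_⟩
    · have := Finset.card_insert_le c S
      simp only [List.length_cons]
      omega
    · rw [List.getLast_cons_cons]
      exact Relation.ReflTransGen.head ⟨c, Finset.mem_insert_self _ _, h1, h2, h3⟩
        (reach_mono (Finset.subset_insert _ _) hreach)

lemma reach_small [Fintype V] {F : Finset (Finset (V × Bool))} {x y : V × Bool}
    (h : Reach F x y) :
    ∃ S, S ⊆ F ∧ S.card + 1 ≤ 2 * Fintype.card V ∧ Reach S x y := by
  obtain ⟨l, hl1, hl2, hl3⟩ := exists_nodup_chain _ h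
  obtain ⟨S, hS1, hS2, hS3⟩ := chain_clauses l x hl1
  refine ⟨S, hS1, ?_, hl2 ▸ hS3⟩
  have hcardle := hl3.length_le_card
  simp only [List.length_cons, Fintype.card_prod, Fintype.card_bool] at hcardle
  omega

lemma sat_of_no_contra [Fintype V] {F : Finset (Finset (V × Bool))}
    (hcard : ∀ c ∈ F, c.card = 2)
    (h : ∀ ℓ : V × Bool, ¬ (Reach F ℓ (neg ℓ) ∧ Reach F (neg ℓ) ℓ)) :
    Satisfiable F := by
  classical
  set Good : Finset (V × Bool) → Prop :=
    fun M => (∀ x ∈ M, ∀ y, Step F x y → y ∈ M) ∧ ∀ x ∈ M, neg x ∉ M with hGoodDef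
  have hne : (Finset.univ.filter Good).Nonempty :=
    ⟨∅, by simp [hGoodDef]⟩
  obtain ⟨M, hMmem, hMmax⟩ := Finset.exists_max_image _ Finset.card hne
  rw [Finset.mem_filter] at hMmem
  have hM : Good M := hMmem.2
  have hMreach : ∀ x ∈ M, ∀ y, Reach F x y → y ∈ M := by
    intro x hx y hr
    induction hr with
    | refl => exact hx
    | tail _ hs ih => exact hM.1 _ ih _ hs
  have hkey : ∀ p : V × Bool, p ∈ M ∨ neg p ∈ M := by
    intro p
    by_contra hcon
    push_neg at hcon
    obtain ⟨hp, hnp⟩ := hcon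
    have hex : ∃ ℓ : V × Bool, ℓ ∉ M ∧ neg ℓ ∉ M ∧ ¬ Reach F ℓ (neg ℓ) := by
      rcases not_and_or.mp (h p) with h1 | h2
      · exact ⟨p, hp, hnp, h1⟩
      · exact ⟨neg p, hnp, by simpa using hp, by simpa using h2⟩
    obtain ⟨ℓ, hℓM, hnℓM, hℓ⟩ := hex
    set M' := M ∪ Finset.univ.filter (fun y => Reach F ℓ y) with hM'def
    have hsub : M ⊆ M' := Finset.subset_union_left
    have hmem' : ∀ y, y ∈ M' ↔ y ∈ M ∨ Reach F ℓ y := by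
      intro y; simp [hM'def]
    have hℓM' : ℓ ∈ M' := (hmem' ℓ).mpr (Or.inr Relation.ReflTransGen.refl)
    have hGoodM' : Good M' := by
      constructor
      · intro x hx y hs
        rcases (hmem' x).mp hx with hx | hx
        · exact hsub (hM.1 x hx y hs)
        · exact (hmem' y).mpr (Or.inr (hx.tail hs))
      · intro x hx hnx
        rcases (hmem' x).mp hx with hx1 | hx1 <;> rcases (hmem' (neg x)).mp hnx with hx2 | hx2
        · exact hM.2 x hx1 hx2
        · have hr := reach_flip hx2
          rw [neg_neg] at hr
          exact hnℓM (hMreach x hx1 _ hr)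
        · exact hnℓM (hMreach _ hx2 _ (reach_flip hx1))
        · have hr := reach_flip hx2
          rw [neg_neg] at hr
          exact hℓ (hx1.trans hr)
    have hlt : M.card < M'.card :=
      Finset.card_lt_card ((Finset.ssubset_iff_of_subset hsub).mpr ⟨ℓ, hℓM', hℓM⟩)
    have := hMmax M' (Finset.mem_filter.mpr ⟨Finset.mem_univ _, hGoodM'⟩)
    omega
  refine ⟨fun v => decide ((v, true) ∈ M), ?_⟩
  have hlitM : ∀ p ∈ M, Lit (fun v => decide ((v, true) ∈ M)) p := by
    rintro ⟨v, b⟩ hp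
    cases b
    · have hnt : (v, true) ∉ M := fun hmem => hM.2 _ hp (by simpa [neg] using hmem)
      simp [Lit, hnt]
    · simp [Lit, hp]
  intro c hc
  obtain ⟨p, q, hpq, rfl⟩ := Finset.card_eq_two.mp (hcard c hc)
  by_cases hpM : p ∈ M
  · exact ⟨p, by simp, hlitM p hpM⟩
  by_cases hqM : q ∈ M
  · exact ⟨q, by simp, hlitM q hqM⟩
  have hnp : neg p ∈ M := (hkey p).resolve_left hpM
  have hstep : Step F (neg p) q := ⟨{p, q}, hc, by simp, by simp, by simpa using hpq⟩
  exact absurd (hM.1 _ hnp _ hstep) hqM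

lemma exists_contra [Fintype V] {F : Finset (Finset (V × Bool))}
    (hcard : ∀ c ∈ F, c.card = 2) (hunsat : ¬ Satisfiable F) :
    ∃ ℓ : V × Bool, Reach F ℓ (neg ℓ) ∧ Reach F (neg ℓ) ℓ := by
  by_contra h
  exact hunsat (sat_of_no_contra hcard (fun ℓ hc => h ⟨ℓ, hc⟩))

lemma unsat_of_contra {S : Finset (Finset (V × Bool))} {ℓ : V × Bool}
    (hcard : ∀ c ∈ S, c.card = 2)
    (h1 : Reach S ℓ (neg ℓ)) (h2 : Reach S (neg ℓ) ℓ) : ¬ Satisfiable S := by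
  rintro ⟨a, ha⟩
  by_cases hl : Lit a ℓ
  · exact lit_neg.mp (reach_prop hcard ha h1 hl) hl
  · exact hl (reach_prop hcard ha h2 (lit_neg.mpr hl))

end TwoSatAux


open TwoSatAux

theorem minimalUnsat_twoSat_card_le {V : Type} [DecidableEq V] [Fintype V] (n : ℕ)
    (hV : Fintype.card V = n) (F : Finset (Finset (V × Bool)))
    (h2 : IsKSat 2 F) (hmin : MinimalUnsat F) :
    F.card ≤ 4 * n := by
  have hcard : ∀ c ∈ F, c.card = 2 := fun c hc => (h2 c hc).1
  obtain ⟨ℓ, hr1, hr2⟩ := exists_contra hcard hmin.1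
  obtain ⟨S1, hS1F, hS1card, hS1r⟩ := reach_small hr1
  obtain ⟨S2, hS2F, hS2card, hS2r⟩ := reach_small hr2
  set S := S1 ∪ S2 with hSdef
  have hSF : S ⊆ F := Finset.union_subset hS1F hS2F
  have hScard : ∀ c ∈ S, c.card = 2 := fun c hc => hcard c (hSF hc)
  have hSunsat : ¬ Satisfiable S :=
    unsat_of_contra hScard
      (reach_mono Finset.subset_union_left hS1r)
      (reach_mono Finset.subset_union_right hS2r)
  have hFS : F ⊆ S := by
    intro c hcF
    by_contra hcS
    have hsub : S ⊆ F.erase c := by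
      intro x hx
      exact Finset.mem_erase.mpr ⟨fun hxc => hcS (hxc ▸ hx), hSF hx⟩
    obtain ⟨a, ha⟩ := hmin.2 c hcF
    exact hSunsat ⟨a, fun d hd => ha d (hsub hd)⟩
  have hcardle : F.card ≤ S1.card + S2.card :=
    le_trans (Finset.card_le_card hFS) (Finset.card_union_le _ _)
  rw [hV] at hS1card hS2card
  omega
end

section
/- Let F_X = (V_X, C_X) and F_Y = (V_Y, C_Y) be CNF formulas over disjoint sets of variables, let c_0 = z_1 ∨ z_2 ∨ ... ∨ z_k be a clause of C_X consisting of k distinct literals with k ≤ |C_Y|, and let h : C_Y → {z_1, ..., z_k} be any surjective map. Define the formula F_Z over the variables V_X ∪ V_Y with clause set C_Z = (C_X \ {c_0}) ∪ { c_y ∨ h(c_y) : c_y ∈ C_Y }. If F_X and F_Y are both minimal unsatisfiable, then F_Z is minimal unsatisfiable. -/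
/-- Lift a clause along a renaming of variables. -/
def liftClause {A B : Type} [DecidableEq A] [DecidableEq B] (f : A → B)
    (c : Finset (A × Bool)) : Finset (B × Bool) :=
  c.image fun p => (f p.1, p.2)

/-- The clause set `C_Z = (C_X \ {c_0}) ∪ { c_y ∨ h(c_y) : c_y ∈ C_Y }`, with the
variables of `F_X` and `F_Y` made disjoint via the sum type `VX ⊕ VY`. -/
def combinedFormula {VX VY : Type} [DecidableEq VX] [DecidableEq VY]
    (CX : Finset (Finset (VX × Bool))) (CY : Finset (Finset (VY × Bool)))
    (c₀ : Finset (VX × Bool)) (h : Finset (VY × Bool) → VX × Bool) :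
    Finset (Finset ((VX ⊕ VY) × Bool)) :=
  ((CX.erase c₀).image (liftClause Sum.inl)) ∪
    (CY.image fun c => insert (Sum.inl (h c).1, (h c).2) (liftClause Sum.inr c))

lemma liftClauseSat_inl {VX VY : Type} [DecidableEq VX] [DecidableEq VY]
    (aX : VX → Bool) (aY : VY → Bool) (c : Finset (VX × Bool)) :
    ClauseSat (Sum.elim aX aY) (liftClause Sum.inl c) ↔ ClauseSat aX c := by
  constructor
  · rintro ⟨p, hp, hap⟩
    obtain ⟨q, hq, rfl⟩ := Finset.mem_image.mp hp
    exact ⟨q, hq, hap⟩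
  · rintro ⟨q, hq, haq⟩
    exact ⟨(Sum.inl q.1, q.2), Finset.mem_image_of_mem _ hq, haq⟩

lemma liftClauseSat_inr {VX VY : Type} [DecidableEq VX] [DecidableEq VY]
    (aX : VX → Bool) (aY : VY → Bool) (c : Finset (VY × Bool)) :
    ClauseSat (Sum.elim aX aY) (liftClause Sum.inr c) ↔ ClauseSat aY c := by
  constructor
  · rintro ⟨p, hp, hap⟩
    obtain ⟨q, hq, rfl⟩ := Finset.mem_image.mp hp
    exact ⟨q, hq, hap⟩
  · rintro ⟨q, hq, haq⟩
    exact ⟨(Sum.inr q.1, q.2), Finset.mem_image_of_mem _ hq, haq⟩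

theorem combined_minimalUnsat {VX VY : Type} [DecidableEq VX] [DecidableEq VY]
    (CX : Finset (Finset (VX × Bool))) (CY : Finset (Finset (VY × Bool)))
    (c₀ : Finset (VX × Bool)) (hc₀ : c₀ ∈ CX) (k : ℕ) (hk : c₀.card = k)
    (hkY : k ≤ CY.card)
    (h : Finset (VY × Bool) → VX × Bool)
    (hmem : ∀ c ∈ CY, h c ∈ c₀)
    (hsurj : ∀ z ∈ c₀, ∃ c ∈ CY, h c = z)
    (hX : MinimalUnsat CX) (hY : MinimalUnsat CY) :
    MinimalUnsat (combinedFormula CX CY c₀ h) := by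
  obtain ⟨hXu, hXm⟩ := hX
  obtain ⟨hYu, hYm⟩ := hY
  constructor
  · rintro ⟨a, ha⟩
    have hnY : ¬ FormulaSat (fun v => a (Sum.inr v)) CY := fun h' => hYu ⟨_, h'⟩
    have hne : ∃ cy ∈ CY, ¬ ClauseSat (fun v => a (Sum.inr v)) cy := by
      by_contra hno; push_neg at hno; exact hnY hno
    obtain ⟨cy, hcy, hns⟩ := hne
    have hmemZ : insert (Sum.inl (h cy).1, (h cy).2) (liftClause Sum.inr cy) ∈
        combinedFormula CX CY c₀ h :=
      Finset.mem_union_right _ (Finset.mem_image_of_mem _ hcy)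
    obtain ⟨p, hp, hap⟩ := ha _ hmemZ
    rcases Finset.mem_insert.mp hp with rfl | hp'
    · apply hXu
      refine ⟨fun v => a (Sum.inl v), fun c hc => ?_⟩
      by_cases hcc : c = c₀
      · subst hcc
        exact ⟨h cy, hmem cy hcy, hap⟩
      · have hcZ : liftClause Sum.inl c ∈ combinedFormula CX CY c₀ h :=
          Finset.mem_union_left _
            (Finset.mem_image_of_mem _ (Finset.mem_erase.mpr ⟨hcc, hc⟩))
        obtain ⟨q, hq, haq⟩ := ha _ hcZ
        obtain ⟨r, hr, rfl⟩ := Finset.mem_image.mp hq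
        exact ⟨r, hr, haq⟩
    · obtain ⟨q, hq, rfl⟩ := Finset.mem_image.mp hp'
      exact hns ⟨q, hq, hap⟩
  · intro c hc
    rcases Finset.mem_union.mp hc with hcl | hcr
    · obtain ⟨cx, hcx, rfl⟩ := Finset.mem_image.mp hcl
      obtain ⟨aX, haX⟩ := hXm cx (Finset.mem_of_mem_erase hcx)
      have hc₀sat : ClauseSat aX c₀ :=
        haX c₀ (Finset.mem_erase.mpr ⟨(Finset.ne_of_mem_erase hcx).symm, hc₀⟩)
      obtain ⟨z, hz, haz⟩ := hc₀sat
      obtain ⟨cys, hcys, hhz⟩ := hsurj z hz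
      obtain ⟨aY, haY⟩ := hYm cys hcys
      refine ⟨Sum.elim aX aY, fun d hd => ?_⟩
      have hdne := Finset.ne_of_mem_erase hd
      rcases Finset.mem_union.mp (Finset.mem_of_mem_erase hd) with h1 | h2
      · obtain ⟨cx', hcx', rfl⟩ := Finset.mem_image.mp h1
        have hne' : cx' ≠ cx := fun e => hdne (by rw [e])
        exact (liftClauseSat_inl aX aY cx').mpr
          (haX cx' (Finset.mem_erase.mpr ⟨hne', Finset.mem_of_mem_erase hcx'⟩))
      · obtain ⟨cy, hcy, rfl⟩ := Finset.mem_image.mp h2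
        by_cases hsat : aX (h cy).1 = (h cy).2
        · exact ⟨(Sum.inl (h cy).1, (h cy).2), Finset.mem_insert_self _ _, hsat⟩
        · have hne' : cy ≠ cys := by
            intro e; rw [e, hhz] at hsat; exact hsat haz
          obtain ⟨q, hq, haq⟩ := haY cy (Finset.mem_erase.mpr ⟨hne', hcy⟩)
          exact ⟨(Sum.inr q.1, q.2),
            Finset.mem_insert_of_mem (Finset.mem_image_of_mem _ hq), haq⟩
    · obtain ⟨cy0, hcy0, rfl⟩ := Finset.mem_image.mp hcr
      obtain ⟨aX, haX⟩ := hXm c₀ hc₀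
      obtain ⟨aY, haY⟩ := hYm cy0 hcy0
      refine ⟨Sum.elim aX aY, fun d hd => ?_⟩
      have hdne := Finset.ne_of_mem_erase hd
      rcases Finset.mem_union.mp (Finset.mem_of_mem_erase hd) with h1 | h2
      · obtain ⟨cx', hcx', rfl⟩ := Finset.mem_image.mp h1
        exact (liftClauseSat_inl aX aY cx').mpr (haX cx' hcx')
      · obtain ⟨cy, hcy, rfl⟩ := Finset.mem_image.mp h2
        have hne' : cy ≠ cy0 := fun e => hdne (by rw [e])
        obtain ⟨q, hq, haq⟩ := haY cy (Finset.mem_erase.mpr ⟨hne', hcy⟩)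
        exact ⟨(Sum.inr q.1, q.2),
          Finset.mem_insert_of_mem (Finset.mem_image_of_mem _ hq), haq⟩
end

section
/- Let F_X = (V_X, C_X) and F_Y = (V_Y, C_Y) be CNF formulas over disjoint sets of variables, let c_0 = z_1 ∨ z_2 ∨ ... ∨ z_k be a clause of C_X consisting of k distinct literals with k ≤ |C_Y|, and let h : C_Y → {z_1, ..., z_k} be any surjective map. Define the formula F_Z over the variables V_X ∪ V_Y with clause set C_Z = (C_X \ {c_0}) ∪ { c_y ∨ h(c_y) : c_y ∈ C_Y }. If F_X and F_Y are both unsatisfiable, then F_Z is unsatisfiable. -/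
theorem combined_unsat {VX VY : Type} [DecidableEq VX] [DecidableEq VY]
    (CX : Finset (Finset (VX × Bool))) (CY : Finset (Finset (VY × Bool)))
    (c₀ : Finset (VX × Bool)) (hc₀ : c₀ ∈ CX) (k : ℕ) (hk : c₀.card = k)
    (hkY : k ≤ CY.card)
    (h : Finset (VY × Bool) → VX × Bool)
    (hmem : ∀ c ∈ CY, h c ∈ c₀)
    (hsurj : ∀ z ∈ c₀, ∃ c ∈ CY, h c = z)
    (hX : ¬ Satisfiable CX) (hY : ¬ Satisfiable CY) :
    ¬ Satisfiable (combinedFormula CX CY c₀ h) := by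
  rintro ⟨a, ha⟩
  -- aY doesn't satisfy some clause cy ∈ CY
  have hYfail : ∃ cy ∈ CY, ¬ ClauseSat (fun v => a (Sum.inr v)) cy := by
    by_contra hcon
    push_neg at hcon
    exact hY ⟨_, hcon⟩
  obtain ⟨cy, hcy, hfail⟩ := hYfail
  -- the combined clause for cy is satisfied
  have hmemZ : insert (Sum.inl (h cy).1, (h cy).2) (liftClause Sum.inr cy)
      ∈ combinedFormula CX CY c₀ h := by
    apply Finset.mem_union_right
    exact Finset.mem_image_of_mem _ hcy
  obtain ⟨p, hp, hap⟩ := ha _ hmemZ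
  rcases Finset.mem_insert.mp hp with hp | hp
  · -- p is the h cy literal: aX satisfies c₀ via h cy
    subst hp
    apply hX
    refine ⟨fun v => a (Sum.inl v), fun c hc => ?_⟩
    by_cases hcc : c = c₀
    · subst hcc
      exact ⟨h cy, hmem cy hcy, hap⟩
    · have hcZ : liftClause Sum.inl c ∈ combinedFormula CX CY c₀ h :=
        Finset.mem_union_left _ (Finset.mem_image_of_mem _
          (Finset.mem_erase.mpr ⟨hcc, hc⟩))
      obtain ⟨q, hq, haq⟩ := ha _ hcZ
      obtain ⟨r, hr, hrq⟩ := Finset.mem_image.mp hq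
      refine ⟨r, hr, ?_⟩
      simpa [← hrq] using haq
  · -- p comes from cy: contradiction with hfail
    obtain ⟨r, hr, hrp⟩ := Finset.mem_image.mp hp
    exact absurd ⟨r, hr, by simpa [← hrp] using hap⟩ hfail
end

section
/- Let F_X = (V_X, C_X) and F_Y = (V_Y, C_Y) be minimal unsatisfiable CNF formulas over disjoint sets of variables, let c_0 = z_1 ∨ z_2 ∨ ... ∨ z_k be a clause of C_X consisting of k distinct literals with k ≤ |C_Y|, and let h : C_Y → {z_1, ..., z_k} be any surjective map. Define the formula F_Z over the variables V_X ∪ V_Y with clause set C_Z = (C_X \ {c_0}) ∪ { c_y ∨ h(c_y) : c_y ∈ C_Y }. Then for every clause c_z ∈ C_X \ {c_0}, the formula obtained from F_Z by removing c_z is satisfiable. -/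
theorem combined_erase_old_sat {VX VY : Type} [DecidableEq VX] [DecidableEq VY]
    (CX : Finset (Finset (VX × Bool))) (CY : Finset (Finset (VY × Bool)))
    (c₀ : Finset (VX × Bool)) (hc₀ : c₀ ∈ CX) (k : ℕ) (hk : c₀.card = k)
    (hkY : k ≤ CY.card)
    (h : Finset (VY × Bool) → VX × Bool)
    (hmem : ∀ c ∈ CY, h c ∈ c₀)
    (hsurj : ∀ z ∈ c₀, ∃ c ∈ CY, h c = z)
    (hX : MinimalUnsat CX) (hY : MinimalUnsat CY) :
    ∀ cz ∈ CX.erase c₀,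
      Satisfiable ((combinedFormula CX CY c₀ h).erase (liftClause Sum.inl cz)) := by
  intro cz hcz
  obtain ⟨hczne, hczCX⟩ := Finset.mem_erase.mp hcz
  obtain ⟨aX, haX⟩ := hX.2 cz hczCX
  have hc0' : c₀ ∈ CX.erase cz := Finset.mem_erase.mpr ⟨fun e => hczne e.symm, hc₀⟩
  obtain ⟨z, hz, hzsat⟩ := haX c₀ hc0'
  obtain ⟨cstar, hcstar, hhc⟩ := hsurj z hz
  obtain ⟨aY, haY⟩ := hY.2 cstar hcstar
  refine ⟨Sum.elim aX aY, ?_⟩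
  intro d hd
  rw [Finset.mem_erase] at hd
  obtain ⟨hdne, hdmem⟩ := hd
  rw [combinedFormula, Finset.mem_union] at hdmem
  rcases hdmem with hdl | hdr
  · obtain ⟨c, hc, rfl⟩ := Finset.mem_image.mp hdl
    obtain ⟨hcne, hcCX⟩ := Finset.mem_erase.mp hc
    have hcc : c ≠ cz := fun e => hdne (by rw [e])
    obtain ⟨p, hp, hps⟩ := haX c (Finset.mem_erase.mpr ⟨hcc, hcCX⟩)
    exact ⟨(Sum.inl p.1, p.2), Finset.mem_image.mpr ⟨p, hp, rfl⟩, hps⟩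
  · obtain ⟨c, hc, rfl⟩ := Finset.mem_image.mp hdr
    by_cases hce : c = cstar
    · subst hce
      exact ⟨(Sum.inl (h c).1, (h c).2), Finset.mem_insert_self _ _, by
        rw [hhc]; exact hzsat⟩
    · obtain ⟨p, hp, hps⟩ := haY c (Finset.mem_erase.mpr ⟨hce, hc⟩)
      exact ⟨(Sum.inr p.1, p.2),
        Finset.mem_insert_of_mem (Finset.mem_image.mpr ⟨p, hp, rfl⟩), hps⟩
end

section
/- Let F_X = (V_X, C_X) and F_Y = (V_Y, C_Y) be minimal unsatisfiable CNF formulas over disjoint sets of variables, let c_0 = z_1 ∨ z_2 ∨ ... ∨ z_k be a clause of C_X consisting of k distinct literals with k ≤ |C_Y|, and let h : C_Y → {z_1, ..., z_k} be any surjective map. Define the formula F_Z over the variables V_X ∪ V_Y with clause set C_Z = (C_X \ {c_0}) ∪ { c_y ∨ h(c_y) : c_y ∈ C_Y }. Then for every c' ∈ C_Y, the formula obtained from F_Z by removing the clause c' ∨ h(c') is satisfiable. -/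
theorem combined_erase_new_sat {VX VY : Type} [DecidableEq VX] [DecidableEq VY]
    (CX : Finset (Finset (VX × Bool))) (CY : Finset (Finset (VY × Bool)))
    (c₀ : Finset (VX × Bool)) (hc₀ : c₀ ∈ CX) (k : ℕ) (hk : c₀.card = k)
    (hkY : k ≤ CY.card)
    (h : Finset (VY × Bool) → VX × Bool)
    (hmem : ∀ c ∈ CY, h c ∈ c₀)
    (hsurj : ∀ z ∈ c₀, ∃ c ∈ CY, h c = z)
    (hX : MinimalUnsat CX) (hY : MinimalUnsat CY) :
    ∀ c' ∈ CY,
      Satisfiable ((combinedFormula CX CY c₀ h).erase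
        (insert (Sum.inl (h c').1, (h c').2) (liftClause Sum.inr c'))) := by
  intro c' hc'
  obtain ⟨aX, haX⟩ := hX.2 c₀ hc₀
  obtain ⟨aY, haY⟩ := hY.2 c' hc'
  refine ⟨Sum.elim aX aY, ?_⟩
  intro c hcmem
  rw [Finset.mem_erase] at hcmem
  obtain ⟨hne, hc⟩ := hcmem
  rw [combinedFormula, Finset.mem_union] at hc
  rcases hc with hc | hc
  · obtain ⟨cx, hcx, rfl⟩ := Finset.mem_image.mp hc
    obtain ⟨p, hp, hap⟩ := haX cx hcx
    exact ⟨(Sum.inl p.1, p.2), Finset.mem_image.mpr ⟨p, hp, rfl⟩, hap⟩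
  · obtain ⟨cy, hcy, rfl⟩ := Finset.mem_image.mp hc
    have hcy' : cy ∈ CY.erase c' := Finset.mem_erase.mpr ⟨fun e => hne (by rw [e]), hcy⟩
    obtain ⟨p, hp, hap⟩ := haY cy hcy'
    exact ⟨(Sum.inr p.1, p.2), Finset.mem_insert_of_mem (Finset.mem_image.mpr ⟨p, hp, rfl⟩), hap⟩
end

section
/- For every integer m ≥ 1, the CNF formula F_0 over the variables x_1, ..., x_{6m} whose clauses are all 3-clauses x_{i_1} ∨ x_{i_2} ∨ x_{i_3} with 1 ≤ i_1 ≤ 2m, 2m+1 ≤ i_2 ≤ 4m, 4m+1 ≤ i_3 ≤ 6m, together with the three clauses ¬x_1 ∨ ... ∨ ¬x_{2m}, ¬x_{2m+1} ∨ ... ∨ ¬x_{4m}, and ¬x_{4m+1} ∨ ... ∨ ¬x_{6m}, is minimal unsatisfiable: F_0 is unsatisfiable, and for every clause c of F_0 the formula obtained from F_0 by removing c is satisfiable. -/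
/-- The formula `F₀` over variables `x_0, …, x_{6m-1}`: all positive 3-clauses
`x_{i₁} ∨ x_{i₂} ∨ x_{i₃}` with `i₁ < 2m`, `2m ≤ i₂ < 4m`, `4m ≤ i₃ < 6m`,
together with the three negative clauses `¬x_0 ∨ … ∨ ¬x_{2m-1}`,
`¬x_{2m} ∨ … ∨ ¬x_{4m-1}` and `¬x_{4m} ∨ … ∨ ¬x_{6m-1}`. -/
def F₀ (m : ℕ) : Finset (Finset (ℕ × Bool)) :=
  ((Finset.range (2 * m) ×ˢ Finset.range (2 * m) ×ˢ Finset.range (2 * m)).image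
    fun p => ({(p.1, true), (2 * m + p.2.1, true), (4 * m + p.2.2, true)} :
      Finset (ℕ × Bool))) ∪
  ({(Finset.range (2 * m)).image fun i => (i, false),
    (Finset.range (2 * m)).image fun i => (2 * m + i, false),
    (Finset.range (2 * m)).image fun i => (4 * m + i, false)} :
      Finset (Finset (ℕ × Bool)))

lemma mem_F₀ (m : ℕ) (c : Finset (ℕ × Bool)) :
    c ∈ F₀ m ↔
      (∃ p1 p2 p3, p1 < 2*m ∧ p2 < 2*m ∧ p3 < 2*m ∧
        c = {(p1, true), (2*m+p2, true), (4*m+p3, true)}) ∨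
      c = (Finset.range (2*m)).image (fun i => (i, false)) ∨
      c = (Finset.range (2*m)).image (fun i => (2*m+i, false)) ∨
      c = (Finset.range (2*m)).image (fun i => (4*m+i, false)) := by
  simp only [F₀, Finset.mem_union, Finset.mem_image, Finset.mem_product,
    Finset.mem_range, Finset.mem_insert, Finset.mem_singleton, Prod.exists]
  constructor
  · rintro (⟨a, b, c, ⟨h1, h2, h3⟩, rfl⟩ | h)
    · exact Or.inl ⟨a, b, c, h1, h2, h3, rfl⟩
    · tauto
  · rintro (⟨a, b, c, h1, h2, h3, rfl⟩ | h)
    · exact Or.inl ⟨a, b, c, ⟨h1, h2, h3⟩, rfl⟩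
    · tauto

lemma clauseSat_neg {m : ℕ} (a : ℕ → Bool) (f : ℕ → ℕ) :
    ClauseSat a ((Finset.range (2*m)).image (fun i => (f i, false))) ↔
      ∃ i < 2*m, a (f i) = false := by
  simp [ClauseSat]

theorem F₀_minimalUnsat (m : ℕ) (hm : 1 ≤ m) : MinimalUnsat (F₀ m) := by
  constructor
  · rintro ⟨a, ha⟩
    obtain ⟨i1, hi1, h1⟩ := (clauseSat_neg a id).mp
      (ha _ ((mem_F₀ m _).mpr (Or.inr (Or.inl rfl))))
    obtain ⟨i2, hi2, h2⟩ := (clauseSat_neg a (fun i => 2*m+i)).mp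
      (ha _ ((mem_F₀ m _).mpr (Or.inr (Or.inr (Or.inl rfl)))))
    obtain ⟨i3, hi3, h3⟩ := (clauseSat_neg a (fun i => 4*m+i)).mp
      (ha _ ((mem_F₀ m _).mpr (Or.inr (Or.inr (Or.inr rfl)))))
    have hpos := ha _ ((mem_F₀ m _).mpr (Or.inl ⟨i1, i2, i3, hi1, hi2, hi3, rfl⟩))
    simp only [ClauseSat, Finset.mem_insert, Finset.mem_singleton] at hpos
    obtain ⟨p, hp | hp | hp, hap⟩ := hpos <;> subst hp <;> simp_all
  · intro c hc
    rw [mem_F₀] at hc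
    rcases hc with ⟨p1, p2, p3, h1, h2, h3, rfl⟩ | rfl | rfl | rfl
    · refine ⟨fun v => decide (v ≠ p1 ∧ v ≠ 2*m+p2 ∧ v ≠ 4*m+p3), ?_⟩
      intro c' hc'
      have hne := Finset.ne_of_mem_erase hc'
      have hc'' := (mem_F₀ m c').mp (Finset.mem_of_mem_erase hc')
      rcases hc'' with ⟨q1, q2, q3, g1, g2, g3, rfl⟩ | rfl | rfl | rfl
      · by_cases e1 : q1 = p1
        · by_cases e2 : q2 = p2
          · by_cases e3 : q3 = p3
            · exact absurd (by rw [e1, e2, e3]) hne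
            · refine ⟨(4*m+q3, true), by simp, ?_⟩
              simp only [decide_eq_true_eq]
              refine ⟨by omega, by omega, by omega⟩
          · refine ⟨(2*m+q2, true), by simp, ?_⟩
            simp only [decide_eq_true_eq]
            refine ⟨by omega, by omega, by omega⟩
        · refine ⟨(q1, true), by simp, ?_⟩
          simp only [decide_eq_true_eq]
          refine ⟨by omega, by omega, by omega⟩
      · refine (clauseSat_neg _ id).mpr ⟨p1, h1, by simp⟩
      · refine (clauseSat_neg _ _).mpr ⟨p2, h2, by simp⟩
      · refine (clauseSat_neg _ _).mpr ⟨p3, h3, by simp⟩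
    · refine ⟨fun v => decide (v < 2*m), ?_⟩
      intro c' hc'
      have hne := Finset.ne_of_mem_erase hc'
      have hc'' := (mem_F₀ m c').mp (Finset.mem_of_mem_erase hc')
      rcases hc'' with ⟨q1, q2, q3, g1, g2, g3, rfl⟩ | rfl | rfl | rfl
      · exact ⟨(q1, true), by simp, by simp [g1]⟩
      · exact absurd rfl hne
      · exact (clauseSat_neg _ _).mpr ⟨0, by omega, by simp⟩
      · exact (clauseSat_neg _ _).mpr ⟨0, by omega, by simp; omega⟩
    · refine ⟨fun v => decide (2*m ≤ v ∧ v < 4*m), ?_⟩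
      intro c' hc'
      have hne := Finset.ne_of_mem_erase hc'
      have hc'' := (mem_F₀ m c').mp (Finset.mem_of_mem_erase hc')
      rcases hc'' with ⟨q1, q2, q3, g1, g2, g3, rfl⟩ | rfl | rfl | rfl
      · exact ⟨(2*m+q2, true), by simp, by simp; omega⟩
      · exact (clauseSat_neg _ id).mpr ⟨0, by omega, by simp⟩
      · exact absurd rfl hne
      · exact (clauseSat_neg _ _).mpr ⟨0, by omega, by simp⟩
    · refine ⟨fun v => decide (4*m ≤ v), ?_⟩
      intro c' hc'
      have hne := Finset.ne_of_mem_erase hc'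
      have hc'' := (mem_F₀ m c').mp (Finset.mem_of_mem_erase hc')
      rcases hc'' with ⟨q1, q2, q3, g1, g2, g3, rfl⟩ | rfl | rfl | rfl
      · exact ⟨(4*m+q3, true), by simp, by simp⟩
      · exact (clauseSat_neg _ id).mpr ⟨0, by omega, by simp; omega⟩
      · exact (clauseSat_neg _ _).mpr ⟨0, by omega, by simp; omega⟩
      · exact absurd rfl hne
end

section
/- For all integers k ≥ 2 and m ≥ 1, the CNF formula F_0^(k) over the variables x_1, ..., x_{mk} whose clauses are all k-clauses x_{i_1} ∨ x_{i_2} ∨ ... ∨ x_{i_k} with (t-1)m + 1 ≤ i_t ≤ tm for each 1 ≤ t ≤ k, together with the k clauses ¬x_{(s-1)m+1} ∨ ¬x_{(s-1)m+2} ∨ ... ∨ ¬x_{sm} for 1 ≤ s ≤ k, is minimal unsatisfiable: F_0^(k) is unsatisfiable, and for every clause c of F_0^(k) the formula obtained by removing c is satisfiable. -/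
/-- The formula `F₀^(k)` over variables `x_0, …, x_{mk-1}`: all positive k-clauses
`x_{i₁} ∨ … ∨ x_{i_k}` with `tm ≤ i_{t+1} < (t+1)m` for each `0 ≤ t < k`,
together with the `k` negative clauses `¬x_{sm} ∨ … ∨ ¬x_{(s+1)m - 1}` for `0 ≤ s < k`. -/
def F₀k (k m : ℕ) : Finset (Finset (ℕ × Bool)) :=
  ((Finset.univ : Finset (Fin k → Fin m)).image fun f =>
    (Finset.univ : Finset (Fin k)).image fun (t : Fin k) => (((t : ℕ) * m + (f t : ℕ), true))) ∪
  ((Finset.range k).image fun s =>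
    (Finset.range m).image fun i => (s * m + i, false))

lemma block_inj {m : ℕ} (hm : 1 ≤ m) {t t' r r' : ℕ} (hr : r < m) (hr' : r' < m)
    (h : t * m + r = t' * m + r') : t = t' ∧ r = r' := by
  have hmod : r = r' := by
    have h1 : (t * m + r) % m = r := by
      rw [Nat.add_comm, Nat.add_mul_mod_self_right, Nat.mod_eq_of_lt hr]
    have h2 : (t' * m + r') % m = r' := by
      rw [Nat.add_comm, Nat.add_mul_mod_self_right, Nat.mod_eq_of_lt hr']
    rw [← h1, ← h2, h]
  subst hmod
  have htm : t * m = t' * m := by omega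
  exact ⟨Nat.eq_of_mul_eq_mul_right hm htm, rfl⟩

theorem F₀k_minimalUnsat (k m : ℕ) (hk : 2 ≤ k) (hm : 1 ≤ m) :
    MinimalUnsat (F₀k k m) := by
  have hk0 : 0 < k := by omega
  constructor
  · -- unsatisfiable
    rintro ⟨a, ha⟩
    have hneg : ∀ s : Fin k, ∃ i : Fin m, a ((s : ℕ) * m + (i : ℕ)) = false := by
      intro s
      have hc : ((Finset.range m).image fun i => ((s : ℕ) * m + i, false)) ∈ F₀k k m := by
        apply Finset.mem_union_right
        exact Finset.mem_image.mpr ⟨(s : ℕ), Finset.mem_range.mpr s.isLt, rfl⟩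
      obtain ⟨p, hp, hap⟩ := ha _ hc
      obtain ⟨i, hi, rfl⟩ := Finset.mem_image.mp hp
      exact ⟨⟨i, Finset.mem_range.mp hi⟩, hap⟩
    choose f hf using hneg
    have hc : (Finset.univ.image fun (t : Fin k) => (((t : ℕ) * m + (f t : ℕ), true)))
        ∈ F₀k k m := by
      apply Finset.mem_union_left
      exact Finset.mem_image.mpr ⟨f, Finset.mem_univ f, rfl⟩
    obtain ⟨p, hp, hap⟩ := ha _ hc
    obtain ⟨t, -, rfl⟩ := Finset.mem_image.mp hp
    simp only [hf t] at hap
    exact Bool.false_ne_true hap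
  · -- minimal
    intro c hc
    rcases Finset.mem_union.mp hc with hpos | hneg
    · -- removing a positive clause
      obtain ⟨f₀, -, rfl⟩ := Finset.mem_image.mp hpos
      refine ⟨fun x => !(decide (∃ t : Fin k, x = (t : ℕ) * m + (f₀ t : ℕ))), ?_⟩
      intro c' hc'
      have hne := Finset.ne_of_mem_erase hc'
      rcases Finset.mem_union.mp (Finset.mem_of_mem_erase hc') with hp | hn
      · obtain ⟨g, -, rfl⟩ := Finset.mem_image.mp hp
        have hgf : g ≠ f₀ := by
          rintro rfl; exact hne rfl
        obtain ⟨t, ht⟩ := Function.ne_iff.mp hgf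
        refine ⟨((t : ℕ) * m + (g t : ℕ), true),
          Finset.mem_image.mpr ⟨t, Finset.mem_univ t, rfl⟩, ?_⟩
        simp only
        rw [Bool.not_eq_true', decide_eq_false_iff_not]
        rintro ⟨t', ht'⟩
        obtain ⟨h1, h2⟩ := block_inj hm (g t).isLt (f₀ t').isLt ht'
        have htt : t = t' := Fin.val_injective h1
        subst htt
        exact ht (Fin.ext h2)
      · obtain ⟨s, hs, rfl⟩ := Finset.mem_image.mp hn
        have hsk := Finset.mem_range.mp hs
        refine ⟨(s * m + (f₀ ⟨s, hsk⟩ : ℕ), false),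
          Finset.mem_image.mpr ⟨(f₀ ⟨s, hsk⟩ : ℕ), Finset.mem_range.mpr (f₀ ⟨s, hsk⟩).isLt, rfl⟩, ?_⟩
        simp only
        rw [Bool.not_eq_false', decide_eq_true_iff]
        exact ⟨⟨s, hsk⟩, rfl⟩
    · -- removing a negative clause
      obtain ⟨s₀, hs₀, rfl⟩ := Finset.mem_image.mp hneg
      have hs₀k := Finset.mem_range.mp hs₀
      refine ⟨fun x => decide (s₀ * m ≤ x ∧ x < s₀ * m + m), ?_⟩
      intro c' hc'
      have hne := Finset.ne_of_mem_erase hc'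
      rcases Finset.mem_union.mp (Finset.mem_of_mem_erase hc') with hp | hn
      · obtain ⟨g, -, rfl⟩ := Finset.mem_image.mp hp
        refine ⟨(((⟨s₀, hs₀k⟩ : Fin k) : ℕ) * m + (g ⟨s₀, hs₀k⟩ : ℕ), true),
          Finset.mem_image.mpr ⟨⟨s₀, hs₀k⟩, Finset.mem_univ _, rfl⟩, ?_⟩
        simp only [decide_eq_true_iff]
        have := (g ⟨s₀, hs₀k⟩).isLt
        constructor <;> simp
      · obtain ⟨s, -, rfl⟩ := Finset.mem_image.mp hn
        have hss₀ : s ≠ s₀ := by rintro rfl; exact hne rfl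
        refine ⟨(s * m + 0, false),
          Finset.mem_image.mpr ⟨0, Finset.mem_range.mpr hm, rfl⟩, ?_⟩
        simp only
        rw [decide_eq_false_iff_not]
        rintro ⟨h1, h2⟩
        have hr : s * m + 0 = s₀ * m + (s * m - s₀ * m) := by omega
        obtain ⟨rfl, -⟩ := block_inj hm hm (by omega) hr
        exact hss₀ rfl
end

section
/- For every integer m ≥ 1 there exists a minimal unsatisfiable 3-SAT formula over a set of 9m Boolean variables that has at least 8m^3 clauses. -/
namespace MUAux

def Falsifies {V : Type} (a : V → Bool) (c : Finset (V × Bool)) : Prop :=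
  ∀ p ∈ c, a p.1 ≠ p.2

lemma not_clauseSat_iff {V : Type} (a : V → Bool) (c : Finset (V × Bool)) :
    ¬ ClauseSat a c ↔ Falsifies a c := by
  unfold ClauseSat Falsifies
  push_neg
  rfl

lemma mu_of_cover_privacy {V : Type} [DecidableEq V] (F : Finset (Finset (V × Bool)))
    (cover : ∀ a : V → Bool, ∃ c ∈ F, Falsifies a c)
    (priv : ∀ c ∈ F, ∃ a : V → Bool, Falsifies a c ∧ ∀ d ∈ F, d ≠ c → ClauseSat a d) :
    MinimalUnsat F := by
  constructor
  · rintro ⟨a, ha⟩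
    obtain ⟨c, hc, hf⟩ := cover a
    exact ((not_clauseSat_iff a c).2 hf) (ha c hc)
  · intro c hc
    obtain ⟨a, _, h2⟩ := priv c hc
    exact ⟨a, fun d hd => h2 d (Finset.mem_of_mem_erase hd) (Finset.ne_of_mem_erase hd)⟩

lemma sat_antitone {V : Type} {S T : Finset (Finset (V × Bool))} (h : S ⊆ T) :
    Satisfiable T → Satisfiable S := fun ⟨a, ha⟩ => ⟨a, fun c hc => ha c (h hc)⟩

lemma transport {V : Type} [DecidableEq V] [Nonempty V] {n : ℕ}
    (e : V → Fin n) (he : Function.Injective e)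
    (F : Finset (Finset (V × Bool))) (h3 : IsKSat 3 F) (hmu : MinimalUnsat F) :
    ∃ G : Finset (Finset (Fin n × Bool)), IsKSat 3 G ∧ MinimalUnsat G ∧ G.card = F.card := by
  classical
  set ℓ : V × Bool → Fin n × Bool := fun p => (e p.1, p.2) with hℓdef
  have hℓinj : Function.Injective ℓ := by
    rintro ⟨v, b⟩ ⟨v', b'⟩ h
    simp only [hℓdef, Prod.mk.injEq] at h
    exact Prod.ext (he h.1) h.2
  set Φ : Finset (V × Bool) → Finset (Fin n × Bool) := fun c => c.image ℓ with hΦdef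
  have hΦinj : Function.Injective Φ := Finset.image_injective hℓinj
  have fwd : ∀ S : Finset (Finset (V × Bool)), Satisfiable S → Satisfiable (S.image Φ) := by
    rintro S ⟨a, ha⟩
    refine ⟨a ∘ Function.invFun e, ?_⟩
    intro c' hc'
    obtain ⟨c, hc, rfl⟩ := Finset.mem_image.1 hc'
    obtain ⟨⟨v, b⟩, hv, hvb⟩ := ha c hc
    refine ⟨ℓ (v, b), Finset.mem_image_of_mem ℓ hv, ?_⟩
    simpa [hℓdef, Function.leftInverse_invFun he v] using hvb
  refine ⟨F.image Φ, ?_, ?_, Finset.card_image_of_injective F hΦinj⟩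
  · intro c' hc'
    obtain ⟨c, hc, rfl⟩ := Finset.mem_image.1 hc'
    obtain ⟨hcard, hvars⟩ := h3 c hc
    constructor
    · rw [hΦdef]; rw [Finset.card_image_of_injective c hℓinj, hcard]
    · have : (Φ c).image Prod.fst = (c.image Prod.fst).image e := by
        simp only [hΦdef, Finset.image_image]
        rfl
      rw [this, Finset.card_image_of_injective _ he, hvars]
  · constructor
    · rintro ⟨a, ha⟩
      refine hmu.1 ⟨a ∘ e, ?_⟩
      intro c hc
      obtain ⟨pw, hpwmem, hpweq⟩ := ha (Φ c) (Finset.mem_image_of_mem Φ hc)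
      obtain ⟨p, hp, rfl⟩ := Finset.mem_image.1 hpwmem
      exact ⟨p, hp, hpweq⟩
    · intro d hd
      obtain ⟨c, hc, rfl⟩ := Finset.mem_image.1 hd
      have hsub : (F.image Φ).erase (Φ c) ⊆ (F.erase c).image Φ := by
        intro d' hd'
        have hne := Finset.ne_of_mem_erase hd'
        obtain ⟨c'', hc'', rfl⟩ := Finset.mem_image.1 (Finset.mem_of_mem_erase hd')
        exact Finset.mem_image_of_mem Φ (Finset.mem_erase.2 ⟨fun h => hne (by rw [h]), hc''⟩)
      exact sat_antitone hsub (fwd _ (hmu.2 c hc))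

end MUAux

namespace MUAux

section Code
variable {m : ℕ}

/-- The `2m` codewords on `m` mark coordinates: `word (b,s)` is the word whose
`c`-th bit is `b == (s ≤ c)` (staircases and reverse staircases). -/
def word (p : Bool × Fin m) (c : Fin m) : Bool := p.1 == decide (p.2.val ≤ c.val)

def certA (p : Bool × Fin m) : Fin m := ⟨p.2.val - 1, by have := p.2.isLt; omega⟩

def certB (p : Bool × Fin m) : Fin m :=
  if p.2.val = 0 then ⟨m - 1, by have := p.2.isLt; omega⟩ else p.2

def certVA (p : Bool × Fin m) : Bool := if p.2.val = 0 then p.1 else !p.1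

def certVB (p : Bool × Fin m) : Bool := p.1

lemma bool_ne_iff {a b : Bool} : a ≠ b ↔ a = !b := by cases a <;> cases b <;> simp

lemma certA_ne_certB (hm : 2 ≤ m) (p : Bool × Fin m) : certA p ≠ certB p := by
  obtain ⟨b, s⟩ := p
  by_cases hs : s.val = 0 <;>
    simp [certA, certB, hs, Fin.ext_iff] <;> omega

lemma word_certA (p : Bool × Fin m) : word p (certA p) = certVA p := by
  obtain ⟨b, s⟩ := p
  by_cases hs : s.val = 0
  · have h1 : s.val ≤ (certA (b, s)).val := by simp [certA, hs]
    simp [word, certVA, hs, h1]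
  · have h1 : ¬ (s.val ≤ (certA (b, s)).val) := by simp [certA]; omega
    simp [word, certVA, hs, h1]

lemma word_certB (p : Bool × Fin m) : word p (certB p) = certVB p := by
  obtain ⟨b, s⟩ := p
  by_cases hs : s.val = 0
  · have h1 : s.val ≤ (certB (b, s)).val := by simp [certB, hs]
    simp [word, certVB, h1]
  · have h1 : s.val ≤ (certB (b, s)).val := by simp [certB, hs]
    simp [word, certVB, h1]

/-- Uniqueness: if the codeword of `p'` matches the certificate of `p`, then `p' = p`. -/
lemma cert_unique (p p' : Bool × Fin m)
    (h1 : word p' (certA p) = certVA p) (h2 : word p' (certB p) = certVB p) : p' = p := by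
  obtain ⟨b, s⟩ := p
  obtain ⟨b', s'⟩ := p'
  have hsm := s.isLt
  have hsm' := s'.isLt
  have H : ∀ (b0 : Bool) (s0 c : Fin m) (v : Bool),
      word (b0, s0) c = v ↔ ((s0.val ≤ c.val) ↔ (b0 = v)) := by
    intro b0 s0 c v
    cases b0 <;> cases v <;> simp [word]
  have hA : (certA (b, s)).val = s.val - 1 := rfl
  by_cases hs : s.val = 0
  · rw [certB, if_pos hs] at h2
    rw [certVA, if_pos hs] at h1
    rw [H] at h1 h2
    rw [hA] at h1
    simp only [certVB] at h2
    replace h1 : s'.val ≤ s.val - 1 ↔ b' = b := h1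
    replace h2 : s'.val ≤ m - 1 ↔ b' = b := h2
    have h2' : b' = b := h2.1 (by omega)
    have hz : s'.val = 0 := by
      by_contra hne
      have := h1.2 h2'
      omega
    have hss : s' = s := Fin.ext (by omega)
    rw [h2', hss]
  · rw [certB, if_neg hs] at h2
    rw [certVA, if_neg hs] at h1
    rw [H] at h1 h2
    rw [hA] at h1
    simp only [certVB] at h2
    replace h1 : s'.val ≤ s.val - 1 ↔ b' = !b := h1
    replace h2 : s'.val ≤ s.val ↔ b' = b := h2
    cases b <;> cases b' <;> simp at h1 h2
    · have hss : s' = s := Fin.ext (by omega)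
      rw [hss]
    · exfalso; omega
    · exfalso; omega
    · have hss : s' = s := Fin.ext (by omega)
      rw [hss]

/-- Totality: every pattern on the mark coordinates matches some certificate. -/
lemma cert_total (hm : 1 ≤ m) (z : Fin m → Bool) :
    ∃ p : Bool × Fin m, z (certA p) = certVA p ∧ z (certB p) = certVB p := by
  have h0 : 0 < m := hm
  by_cases hall : ∀ c : Fin m, z c = z ⟨0, h0⟩
  · refine ⟨(z ⟨0, h0⟩, ⟨0, h0⟩), ?_, ?_⟩
    · simp [certA, certVA, hall]
    · simp [certB, certVB, hall]
  · push_neg at hall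
    obtain ⟨c0, hc0⟩ := hall
    have key : ∀ n (h : n < m), z ⟨n, h⟩ ≠ z ⟨0, h0⟩ →
        ∃ p : Bool × Fin m, z (certA p) = certVA p ∧ z (certB p) = certVB p := by
      intro n
      induction n with
      | zero => intro h hne; exact absurd rfl hne
      | succ k ih =>
        intro h hne
        by_cases hk : z ⟨k, by omega⟩ = z ⟨0, h0⟩
        · refine ⟨(z ⟨k + 1, h⟩, ⟨k + 1, h⟩), ?_, ?_⟩
          · have hA : certA ((z ⟨k+1, h⟩), (⟨k+1, h⟩ : Fin m)) = ⟨k, by omega⟩ := by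
              simp [certA]
            have hdiff : z ⟨k, by omega⟩ ≠ z ⟨k+1, h⟩ := by rw [hk]; exact fun hh => hne hh.symm
            rw [hA]
            simp [certVA]
            exact bool_ne_iff.1 hdiff
          · simp [certB, certVB]
        · exact ih (by omega) hk
    exact key c0.val c0.isLt (by simpa using hc0)

end Code

end MUAux

namespace MUAux

section Build
variable (m : ℕ)

abbrev Vt := Fin 3 × ((Bool × Fin m) ⊕ Fin m)

def vC (l : Fin 3) (i : Bool × Fin m) : Vt m := (l, Sum.inl i)
def mC (l : Fin 3) (c : Fin m) : Vt m := (l, Sum.inr c)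

def mainCl (x : (Bool × Fin m) × (Bool × Fin m) × (Bool × Fin m)) : Finset (Vt m × Bool) :=
  {(vC m 0 x.1, false), (vC m 1 x.2.1, false), (vC m 2 x.2.2, false)}

def auxCl (y : Fin 3 × (Bool × Fin m)) : Finset (Vt m × Bool) :=
  {(vC m y.1 y.2, true), (mC m y.1 (certA y.2), !certVA y.2), (mC m y.1 (certB y.2), !certVB y.2)}

def FF : Finset (Finset (Vt m × Bool)) :=
  Finset.univ.image (mainCl m) ∪ Finset.univ.image (auxCl m)

lemma f01 : (0 : Fin 3) ≠ 1 := by decide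
lemma f02 : (0 : Fin 3) ≠ 2 := by decide
lemma f12 : (1 : Fin 3) ≠ 2 := by decide

lemma mainCl_inj : Function.Injective (mainCl m) := by
  rintro ⟨i, j, k⟩ ⟨i', j', k'⟩ h
  have h1 : (vC m 0 i, false) ∈ mainCl m (i', j', k') := by rw [← h]; simp [mainCl]
  have h2 : (vC m 1 j, false) ∈ mainCl m (i', j', k') := by rw [← h]; simp [mainCl]
  have h3 : (vC m 2 k, false) ∈ mainCl m (i', j', k') := by rw [← h]; simp [mainCl]
  simp [mainCl, vC, Prod.ext_iff, f01, f02, f12, f01.symm, f02.symm, f12.symm] at h1 h2 h3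
  exact Prod.ext (Prod.ext h1.1 h1.2) (Prod.ext (Prod.ext h2.1 h2.2) (Prod.ext h3.1 h3.2))

lemma auxCl_inj : Function.Injective (auxCl m) := by
  rintro ⟨l, i⟩ ⟨l', i'⟩ h
  have h1 : (vC m l i, true) ∈ auxCl m (l', i') := by rw [← h]; simp [auxCl]
  simp [auxCl, vC, mC, Prod.ext_iff] at h1
  exact Prod.ext h1.1 (Prod.ext h1.2.1 h1.2.2)

lemma main_aux_ne (x : (Bool × Fin m) × (Bool × Fin m) × (Bool × Fin m))
    (y : Fin 3 × (Bool × Fin m)) : mainCl m x ≠ auxCl m y := by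
  intro h
  have h1 : (vC m 0 x.1, false) ∈ auxCl m y := by rw [← h]; simp [mainCl]
  simp [auxCl, vC, mC, Prod.ext_iff] at h1

lemma FF_card : (FF m).card = (2 * m) ^ 3 + 3 * (2 * m) := by
  rw [FF, Finset.card_union_of_disjoint, Finset.card_image_of_injective _ (mainCl_inj m),
    Finset.card_image_of_injective _ (auxCl_inj m)]
  · simp only [Finset.card_univ, Fintype.card_prod, Fintype.card_bool, Fintype.card_fin,
      Fintype.card_sum]
    ring
  · rw [Finset.disjoint_left]
    intro c hc hc'
    obtain ⟨x, _, rfl⟩ := Finset.mem_image.1 hc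
    obtain ⟨y, _, hy⟩ := Finset.mem_image.1 hc'
    exact main_aux_ne m x y hy.symm

lemma FF_ksat (hm : 2 ≤ m) : IsKSat 3 (FF m) := by
  intro c hc
  rw [FF, Finset.mem_union] at hc
  rcases hc with hc | hc
  · obtain ⟨x, _, rfl⟩ := Finset.mem_image.1 hc
    constructor
    · rw [Finset.card_eq_three]
      refine ⟨_, _, _, ?_, ?_, ?_, rfl⟩ <;>
        simp [vC, Prod.ext_iff, f01, f02, f12]
    · have himg : (mainCl m x).image Prod.fst = {vC m 0 x.1, vC m 1 x.2.1, vC m 2 x.2.2} := by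
        simp [mainCl]
      rw [himg, Finset.card_eq_three]
      refine ⟨_, _, _, ?_, ?_, ?_, rfl⟩ <;>
        simp [vC, Prod.ext_iff, f01, f02, f12]
  · obtain ⟨y, _, rfl⟩ := Finset.mem_image.1 hc
    have hAB := certA_ne_certB hm y.2
    constructor
    · rw [Finset.card_eq_three]
      refine ⟨_, _, _, ?_, ?_, ?_, rfl⟩ <;>
        simp [vC, mC, Prod.ext_iff, hAB]
    · have himg : (auxCl m y).image Prod.fst =
          {vC m y.1 y.2, mC m y.1 (certA y.2), mC m y.1 (certB y.2)} := by
        simp [auxCl]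
      rw [himg, Finset.card_eq_three]
      refine ⟨_, _, _, ?_, ?_, ?_, rfl⟩ <;>
        simp [vC, mC, Prod.ext_iff, hAB]

/-- assignment used for the private point of a main clause -/
def asg (f : Fin 3 → Bool × Fin m) (v : Vt m) : Bool :=
  match v.2 with
  | Sum.inl i' => decide (i' = f v.1)
  | Sum.inr cc => word (f v.1) cc

lemma asg_v (f : Fin 3 → Bool × Fin m) (l : Fin 3) (i' : Bool × Fin m) :
    asg m f (vC m l i') = decide (i' = f l) := rfl

lemma asg_m (f : Fin 3 → Bool × Fin m) (l : Fin 3) (cc : Fin m) :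
    asg m f (mC m l cc) = word (f l) cc := rfl

/-- assignment used for the private point of an aux clause -/
def asgA (l : Fin 3) (i w0 : Bool × Fin m) (v : Vt m) : Bool :=
  match v.2 with
  | Sum.inl i' => decide (v.1 ≠ l ∧ i' = w0)
  | Sum.inr cc => word (if v.1 = l then i else w0) cc

lemma asgA_v (l : Fin 3) (i w0 : Bool × Fin m) (l' : Fin 3) (i' : Bool × Fin m) :
    asgA m l i w0 (vC m l' i') = decide (l' ≠ l ∧ i' = w0) := rfl

lemma asgA_m (l : Fin 3) (i w0 : Bool × Fin m) (l' : Fin 3) (cc : Fin m) :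
    asgA m l i w0 (mC m l' cc) = word (if l' = l then i else w0) cc := rfl

lemma FF_cover (hm : 2 ≤ m) : ∀ t : Vt m → Bool, ∃ c ∈ FF m, Falsifies t c := by
  intro t
  by_cases hall : ∀ l : Fin 3, ∃ i : Bool × Fin m, t (vC m l i) = true
  · obtain ⟨i, hi⟩ := hall 0
    obtain ⟨j, hj⟩ := hall 1
    obtain ⟨k, hk⟩ := hall 2
    refine ⟨mainCl m (i, j, k),
      Finset.mem_union_left _ (Finset.mem_image_of_mem _ (Finset.mem_univ _)), ?_⟩
    intro p hp
    simp only [mainCl, Finset.mem_insert, Finset.mem_singleton] at hp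
    rcases hp with rfl | rfl | rfl <;> simp [hi, hj, hk]
  · push_neg at hall
    obtain ⟨l, hl⟩ := hall
    have hl' : ∀ i, t (vC m l i) = false := by
      intro i
      have := hl i
      revert this
      cases t (vC m l i) <;> simp
    obtain ⟨p, hp1, hp2⟩ := cert_total (by omega) (fun cc => t (mC m l cc))
    refine ⟨auxCl m (l, p),
      Finset.mem_union_right _ (Finset.mem_image_of_mem _ (Finset.mem_univ _)), ?_⟩
    intro q hq
    simp only [auxCl, Finset.mem_insert, Finset.mem_singleton] at hq
    rcases hq with rfl | rfl | rfl
    · simp [hl' p]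
    · simp only [ne_eq]
      rw [show t (mC m l (certA p)) = certVA p from hp1]
      simp
    · simp only [ne_eq]
      rw [show t (mC m l (certB p)) = certVB p from hp2]
      simp

lemma FF_priv (hm : 2 ≤ m) :
    ∀ c ∈ FF m, ∃ t : Vt m → Bool, Falsifies t c ∧ ∀ d ∈ FF m, d ≠ c → ClauseSat t d := by
  intro c hc
  rw [FF, Finset.mem_union] at hc
  rcases hc with hc | hc
  · -- private point for a main clause
    obtain ⟨x, _, rfl⟩ := Finset.mem_image.1 hc
    obtain ⟨i, j, k⟩ := x
    set sel : Fin 3 → Bool × Fin m := fun l => if l = 0 then i else if l = 1 then j else k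
      with hsel
    have hsel0 : sel 0 = i := by simp [hsel]
    have hsel1 : sel 1 = j := by simp [hsel, f01.symm]
    have hsel2 : sel 2 = k := by simp [hsel, f02.symm, f12.symm]
    refine ⟨asg m sel, ?_, ?_⟩
    · intro p hp
      simp only [mainCl, Finset.mem_insert, Finset.mem_singleton] at hp
      rcases hp with rfl | rfl | rfl <;>
        simp [asg_v, hsel0, hsel1, hsel2]
    · intro d hd hne
      rw [FF, Finset.mem_union] at hd
      rcases hd with hd | hd
      · obtain ⟨⟨i', j', k'⟩, _, rfl⟩ := Finset.mem_image.1 hd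
        by_cases h1 : i' = i
        · by_cases h2 : j' = j
          · by_cases h3 : k' = k
            · exact absurd (by rw [h1, h2, h3]) hne
            · refine ⟨(vC m 2 k', false), by simp [mainCl], ?_⟩
              simp [asg_v, hsel2, h3]
          · refine ⟨(vC m 1 j', false), by simp [mainCl], ?_⟩
            simp [asg_v, hsel1, h2]
        · refine ⟨(vC m 0 i', false), by simp [mainCl], ?_⟩
          simp [asg_v, hsel0, h1]
      · obtain ⟨⟨l, i''⟩, _, rfl⟩ := Finset.mem_image.1 hd
        by_cases hi : i'' = sel l
        · refine ⟨(vC m l i'', true), by simp [auxCl], ?_⟩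
          simp [asg_v, hi]
        · have hnm : ¬ (word (sel l) (certA i'') = certVA i'' ∧
              word (sel l) (certB i'') = certVB i'') := by
            intro hpair
            exact hi (cert_unique i'' (sel l) hpair.1 hpair.2).symm
          rcases not_and_or.1 hnm with hA | hB
          · refine ⟨(mC m l (certA i''), !certVA i''), by simp [auxCl], ?_⟩
            rw [asg_m]
            exact bool_ne_iff.1 hA
          · refine ⟨(mC m l (certB i''), !certVB i''), by simp [auxCl], ?_⟩
            rw [asg_m]
            exact bool_ne_iff.1 hB
  · -- private point for an aux clause
    obtain ⟨⟨l, i⟩, _, rfl⟩ := Finset.mem_image.1 hc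
    set w0 : Bool × Fin m := (false, ⟨0, by omega⟩) with hw0
    refine ⟨asgA m l i w0, ?_, ?_⟩
    · intro p hp
      simp only [auxCl, Finset.mem_insert, Finset.mem_singleton] at hp
      rcases hp with rfl | rfl | rfl
      · simp [asgA_v]
      · rw [asgA_m, if_pos rfl, word_certA]
        simp
      · rw [asgA_m, if_pos rfl, word_certB]
        simp
    · intro d hd hne
      rw [FF, Finset.mem_union] at hd
      rcases hd with hd | hd
      · obtain ⟨x', _, rfl⟩ := Finset.mem_image.1 hd
        fin_cases l
        · refine ⟨(vC m 0 x'.1, false), by simp [mainCl], ?_⟩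
          simp [asgA_v]
        · refine ⟨(vC m 1 x'.2.1, false), by simp [mainCl], ?_⟩
          simp [asgA_v]
        · refine ⟨(vC m 2 x'.2.2, false), by simp [mainCl], ?_⟩
          simp [asgA_v]
      · obtain ⟨⟨l'', i''⟩, _, rfl⟩ := Finset.mem_image.1 hd
        by_cases hll : l'' = l
        · subst hll
          by_cases hii : i'' = i
          · exact absurd (by rw [hii]) hne
          · have hnm : ¬ (word i (certA i'') = certVA i'' ∧
                word i (certB i'') = certVB i'') := by
              intro hpair
              exact hii ((cert_unique i'' i hpair.1 hpair.2).symm)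
            rcases not_and_or.1 hnm with hA | hB
            · refine ⟨(mC m l'' (certA i''), !certVA i''), by simp [auxCl], ?_⟩
              rw [asgA_m, if_pos rfl]
              exact bool_ne_iff.1 hA
            · refine ⟨(mC m l'' (certB i''), !certVB i''), by simp [auxCl], ?_⟩
              rw [asgA_m, if_pos rfl]
              exact bool_ne_iff.1 hB
        · by_cases hw : i'' = w0
          · refine ⟨(vC m l'' i'', true), by simp [auxCl], ?_⟩
            simp [asgA_v, hll, hw]
          · have hnm : ¬ (word w0 (certA i'') = certVA i'' ∧
                word w0 (certB i'') = certVB i'') := by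
              intro hpair
              exact hw ((cert_unique i'' w0 hpair.1 hpair.2).symm)
            rcases not_and_or.1 hnm with hA | hB
            · refine ⟨(mC m l'' (certA i''), !certVA i''), by simp [auxCl], ?_⟩
              rw [asgA_m, if_neg hll]
              exact bool_ne_iff.1 hA
            · refine ⟨(mC m l'' (certB i''), !certVB i''), by simp [auxCl], ?_⟩
              rw [asgA_m, if_neg hll]
              exact bool_ne_iff.1 hB

def enc : ((Bool × Fin m) ⊕ Fin m) → ℕ
  | Sum.inl (false, s) => s.val
  | Sum.inl (true, s) => m + s.val
  | Sum.inr c => 2 * m + c.val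

lemma enc_lt (x : (Bool × Fin m) ⊕ Fin m) : enc m x < 3 * m := by
  rcases x with ⟨b, s⟩ | c
  · have := s.isLt
    cases b <;> simp [enc] <;> omega
  · have := c.isLt
    simp [enc]
    omega

lemma enc_inj : Function.Injective (enc m) := by
  rintro (⟨b, s⟩ | c) (⟨b', s'⟩ | c') h
  · have hs := s.isLt
    have hs' := s'.isLt
    cases b <;> cases b' <;> simp [enc] at h
    · have hss : s = s' := Fin.ext (by omega)
      rw [hss]
    · exfalso; omega
    · exfalso; omega
    · have hss : s = s' := Fin.ext (by omega)
      rw [hss]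
  · exfalso
    have hs := s.isLt
    cases b <;> simp [enc] at h <;> omega
  · exfalso
    have hs := s'.isLt
    cases b' <;> simp [enc] at h <;> omega
  · simp [enc] at h
    exact congrArg Sum.inr (Fin.ext h)

def emb (v : Vt m) : Fin (9 * m) :=
  ⟨v.1.val * (3 * m) + enc m v.2, by
    have h1 : v.1.val ≤ 2 := by have := v.1.isLt; omega
    have h2 := enc_lt m v.2
    have h3 : v.1.val * (3 * m) ≤ 2 * (3 * m) := Nat.mul_le_mul_right _ h1
    omega⟩

lemma emb_inj : Function.Injective (emb m) := by
  rintro ⟨⟨lv, hlv⟩, x⟩ ⟨⟨lv', hlv'⟩, x'⟩ h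
  have h' : lv * (3 * m) + enc m x = lv' * (3 * m) + enc m x' := congrArg Fin.val h
  have e1 := enc_lt m x
  have e2 := enc_lt m x'
  interval_cases lv <;> interval_cases lv' <;>
    first
      | (exfalso; omega)
      | (exact Prod.ext rfl (enc_inj m (show enc m x = enc m x' by omega)))

end Build

end MUAux

namespace MUAux

lemma FF_mu (m : ℕ) (hm : 2 ≤ m) : MinimalUnsat (FF m) :=
  mu_of_cover_privacy (FF m) (FF_cover m hm) (FF_priv m hm)

end MUAux

theorem exists_minimalUnsat_threeSat (m : ℕ) (hm : 1 ≤ m) :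
    ∃ F : Finset (Finset (Fin (9 * m) × Bool)),
      IsKSat 3 F ∧ MinimalUnsat F ∧ 8 * m ^ 3 ≤ F.card := by
  classical
  rcases eq_or_lt_of_le hm with h1 | h2
  · -- m = 1 : the eight full clauses on three variables
    have hm1 : m = 1 := h1.symm
    have h9 : 3 ≤ 9 * m := by omega
    set x0 : Fin (9 * m) := ⟨0, by omega⟩ with hx0
    set x1 : Fin (9 * m) := ⟨1, by omega⟩ with hx1
    set x2 : Fin (9 * m) := ⟨2, by omega⟩ with hx2
    have d01 : x0 ≠ x1 := by simp [hx0, hx1, Fin.ext_iff]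
    have d02 : x0 ≠ x2 := by simp [hx0, hx2, Fin.ext_iff]
    have d12 : x1 ≠ x2 := by simp [hx1, hx2, Fin.ext_iff]
    set g : Bool × Bool × Bool → Finset (Fin (9 * m) × Bool) :=
      fun b => {(x0, b.1), (x1, b.2.1), (x2, b.2.2)} with hg
    have ginj : Function.Injective g := by
      rintro ⟨a, b, c⟩ ⟨a', b', c'⟩ h
      have h1' : (x0, a) ∈ g (a', b', c') := by rw [← h]; simp [hg]
      have h2' : (x1, b) ∈ g (a', b', c') := by rw [← h]; simp [hg]
      have h3' : (x2, c) ∈ g (a', b', c') := by rw [← h]; simp [hg]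
      simp [hg, Prod.ext_iff, d01, d02, d12, d01.symm, d02.symm, d12.symm] at h1' h2' h3'
      simp [h1', h2', h3']
    refine ⟨Finset.univ.image g, ?_, ?_, ?_⟩
    · intro c hc
      obtain ⟨b, _, rfl⟩ := Finset.mem_image.1 hc
      constructor
      · rw [Finset.card_eq_three]
        refine ⟨_, _, _, ?_, ?_, ?_, rfl⟩ <;> simp [Prod.ext_iff, d01, d02, d12]
      · have himg : (g b).image Prod.fst = {x0, x1, x2} := by simp [hg]
        rw [himg, Finset.card_eq_three]
        exact ⟨_, _, _, d01, d02, d12, rfl⟩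
    · apply MUAux.mu_of_cover_privacy
      · intro t
        refine ⟨g (!(t x0), !(t x1), !(t x2)),
          Finset.mem_image_of_mem _ (Finset.mem_univ _), ?_⟩
        intro p hp
        simp only [hg, Finset.mem_insert, Finset.mem_singleton] at hp
        rcases hp with rfl | rfl | rfl <;> simp
      · intro c hc
        obtain ⟨⟨a, b, cc⟩, _, rfl⟩ := Finset.mem_image.1 hc
        set t : Fin (9 * m) → Bool :=
          fun x => if x = x0 then !a else if x = x1 then !b else if x = x2 then !cc else true
          with ht
        refine ⟨t, ?_, ?_⟩
        · intro p hp
          simp only [hg, Finset.mem_insert, Finset.mem_singleton] at hp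
          rcases hp with rfl | rfl | rfl <;>
            simp [ht, d01.symm, d02.symm, d12.symm]
        · intro d hd hne
          obtain ⟨⟨a', b', cc'⟩, _, rfl⟩ := Finset.mem_image.1 hd
          by_cases e1 : a' = a
          · by_cases e2 : b' = b
            · by_cases e3 : cc' = cc
              · exact absurd (by rw [e1, e2, e3]) hne
              · refine ⟨(x2, cc'), by simp [hg], ?_⟩
                have : cc' = !cc := by revert e3; cases cc <;> cases cc' <;> simp
                simp [ht, this, d02.symm, d12.symm]
            · refine ⟨(x1, b'), by simp [hg], ?_⟩
              have : b' = !b := by revert e2; cases b <;> cases b' <;> simp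
              simp [ht, this, d01.symm]
          · refine ⟨(x0, a'), by simp [hg], ?_⟩
            have : a' = !a := by revert e1; cases a <;> cases a' <;> simp
            simp [ht, this]
    · rw [Finset.card_image_of_injective _ ginj]
      simp only [Finset.card_univ, Fintype.card_prod, Fintype.card_bool]
      subst hm1
      norm_num
  · -- m ≥ 2 : the staircase construction
    have hm2 : 2 ≤ m := h2
    have hne : Nonempty (MUAux.Vt m) := ⟨(0, Sum.inr ⟨0, by omega⟩)⟩
    obtain ⟨G, hG3, hGmu, hGcard⟩ := MUAux.transport (MUAux.emb m) (MUAux.emb_inj m)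
      (MUAux.FF m) (MUAux.FF_ksat m hm2) (MUAux.FF_mu m hm2)
    refine ⟨G, hG3, hGmu, ?_⟩
    rw [hGcard, MUAux.FF_card]
    have : (2 * m) ^ 3 = 8 * m ^ 3 := by ring
    omega
end
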